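/- Let {τ_n}_{n≥1} be piecewise expanding maps of [0,1] (each piecewise strictly monotone and C² on the intervals of a finite partition, with |τ_n'| ≥ s > 1 on each piece), converging uniformly to a map τ, and assume all τ_n satisfy the Lasota–Yorke inequality V(P_{τ_n} f) ≤ A·V(f) + B·∫|f| dm with common constants 0 ≤ A < 1 and B. Then for every density f of bounded variation on [0,1], the sequence of Cesàro averages f_n = (1/n) Σ_{i=1}^n P_{τ_{(1,i)}} f, where τ_{(1,i)} = τ_i ∘ ⋯ ∘ τ_1, is uniformly bounded and of uniformly bounded variation, and hence forms a precompact set in L¹([0,1], m). -/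

import Mathlib

open MeasureTheory Filter Topology
open scoped ENNReal

/-- Lebesgue measure on `[0,1]`. -/
noncomputable def m : Measure ℝ := volume.restrict (Set.Icc 0 1)

/-- `T : [0,1] → [0,1]` is piecewise expanding: there is a partition
`0 = a_0 < ⋯ < a_r = 1` such that on each open interval `(a_{i-1}, a_i)` the map `T`
is strictly monotone and `C²` with `|T'| ≥ s` there. -/
def PiecewiseExpanding (T : ℝ → ℝ) (s : ℝ) : Prop :=
  ∃ (r : ℕ) (a : ℕ → ℝ), 0 < r ∧ a 0 = 0 ∧ a r = 1 ∧
    (∀ i < r, a i < a (i + 1)) ∧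
    ∀ i < r,
      (StrictMonoOn T (Set.Ioo (a i) (a (i + 1))) ∨
        StrictAntiOn T (Set.Ioo (a i) (a (i + 1)))) ∧
      ContDiffOn ℝ 2 T (Set.Ioo (a i) (a (i + 1))) ∧
      ∀ x ∈ Set.Ioo (a i) (a (i + 1)),
        s ≤ |derivWithin T (Set.Ioo (a i) (a (i + 1))) x|

/-- `g` is a version of the Frobenius–Perron image of `f` under `T`:
`∫_A g dm = ∫_{T⁻¹(A)} f dm` for every Borel set `A`. -/
def IsFPImage (T : ℝ → ℝ) (f g : ℝ → ℝ) : Prop :=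
  ∀ A : Set ℝ, MeasurableSet A → ∫ x in A, g x ∂m = ∫ x in T ⁻¹' A, f x ∂m

/-- `opComp P n f = (P_n ∘ P_{n-1} ∘ ⋯ ∘ P_1) f` (with `opComp P 0 f = f`),
so `opComp P n f` represents `P_{τ_{(1,n)}} f = P_{τ_n} ⋯ P_{τ_1} f`. -/
def opComp (P : ℕ → (ℝ → ℝ) → (ℝ → ℝ)) : ℕ → (ℝ → ℝ) → (ℝ → ℝ)
  | 0 => fun f => f
  | n + 1 => fun f => P (n + 1) (opComp P n f)

/-! ### Auxiliary lemmas -/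

lemma m_def : m = volume.restrict (Set.Icc 0 1) := rfl

instance : IsProbabilityMeasure m := by
  constructor
  rw [m_def, Measure.restrict_apply_univ, Real.volume_Icc]
  norm_num

lemma m_ae_mem : ∀ᵐ x ∂m, x ∈ Set.Icc (0:ℝ) 1 := by
  rw [m_def]; exact ae_restrict_mem measurableSet_Icc

/-- clamp to `[0,1]` -/
noncomputable def clmp (x : ℝ) : ℝ := max 0 (min 1 x)

lemma clmp_mem (x : ℝ) : clmp x ∈ Set.Icc (0:ℝ) 1 :=
  ⟨le_max_left _ _, max_le (by norm_num) (min_le_left _ _)⟩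

lemma clmp_mono : Monotone clmp := fun _ _ h =>
  max_le_max le_rfl (min_le_min le_rfl h)

lemma clmp_of_mem {x : ℝ} (h : x ∈ Set.Icc (0:ℝ) 1) : clmp x = x := by
  rcases h with ⟨h0, h1⟩
  rw [clmp, min_eq_right h1, max_eq_right h0]

section Var

variable {g : ℝ → ℝ}

/-- the running (total) variation of `g` on `[0, clmp x]` -/
noncomputable def varu (g : ℝ → ℝ) (x : ℝ) : ℝ :=
  (eVariationOn g (Set.Icc 0 1 ∩ Set.Icc 0 (clmp x))).toReal

lemma evar_piece_ne_top (hg : BoundedVariationOn g (Set.Icc 0 1)) (t : Set ℝ) :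
    eVariationOn g (Set.Icc 0 1 ∩ t) ≠ ⊤ :=
  (hg.mono Set.inter_subset_left)

lemma varu_mono (hg : BoundedVariationOn g (Set.Icc 0 1)) : Monotone (varu g) := by
  intro a b hab
  exact ENNReal.toReal_mono (evar_piece_ne_top hg _)
    (eVariationOn.mono _ (Set.inter_subset_inter_right _
      (Set.Icc_subset_Icc le_rfl (clmp_mono hab))))

lemma varu_nonneg (x : ℝ) : 0 ≤ varu g x := ENNReal.toReal_nonneg

lemma varu_le (hg : BoundedVariationOn g (Set.Icc 0 1)) (x : ℝ) :
    varu g x ≤ (eVariationOn g (Set.Icc 0 1)).toReal :=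
  ENNReal.toReal_mono hg (eVariationOn.mono _ Set.inter_subset_left)

lemma varu_key (hg : BoundedVariationOn g (Set.Icc 0 1)) {a b : ℝ} (hab : a ≤ b) :
    |g (clmp b) - g (clmp a)| ≤ varu g b - varu g a := by
  set x := clmp a with hx
  set y := clmp b with hy
  have hxy : x ≤ y := clmp_mono hab
  have hx01 := clmp_mem a
  have hy01 := clmp_mem b
  have hadd := eVariationOn.Icc_add_Icc g (s := Set.Icc 0 1) hx01.1 hxy hx01
  have h1 : eVariationOn g (Set.Icc 0 1 ∩ Set.Icc 0 x) ≠ ⊤ := evar_piece_ne_top hg _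
  have h2 : eVariationOn g (Set.Icc 0 1 ∩ Set.Icc x y) ≠ ⊤ := evar_piece_ne_top hg _
  have hvy : varu g b = varu g a + (eVariationOn g (Set.Icc 0 1 ∩ Set.Icc x y)).toReal := by
    rw [varu, varu, ← hx, ← hy, ← hadd, ENNReal.toReal_add h1 h2]
  have hedist : edist (g x) (g y) ≤ eVariationOn g (Set.Icc 0 1 ∩ Set.Icc x y) :=
    eVariationOn.edist_le g ⟨hx01, le_rfl, hxy⟩ ⟨hy01, hxy, le_rfl⟩
  rw [edist_dist] at hedist
  have := (ENNReal.ofReal_le_iff_le_toReal h2).mp hedist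
  rw [Real.dist_eq] at this
  rw [hvy]
  calc |g y - g x| = |g x - g y| := abs_sub_comm _ _
    _ ≤ _ := by linarith

lemma varv_mono (hg : BoundedVariationOn g (Set.Icc 0 1)) :
    Monotone (fun x => varu g x - g (clmp x)) := by
  intro a b hab
  simp only
  linarith [(abs_le.mp (varu_key hg hab)).2]

lemma measurable_comp_clmp (hg : BoundedVariationOn g (Set.Icc 0 1)) :
    Measurable (fun x => g (clmp x)) := by
  have : (fun x => g (clmp x)) = (fun x => varu g x - (varu g x - g (clmp x))) := by
    funext x; ring
  rw [this]
  exact ((varu_mono hg).measurable).sub ((varv_mono hg).measurable)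

lemma bv_abs_le (hg : BoundedVariationOn g (Set.Icc 0 1)) {x : ℝ}
    (hx : x ∈ Set.Icc (0:ℝ) 1) {y : ℝ} (hy : y ∈ Set.Icc (0:ℝ) 1) :
    |g x - g y| ≤ (eVariationOn g (Set.Icc 0 1)).toReal := by
  have h := eVariationOn.edist_le g hx hy
  rw [edist_dist] at h
  have h2 := (ENNReal.ofReal_le_iff_le_toReal hg).mp h
  rwa [Real.dist_eq] at h2

lemma bv_integrable (hg : BoundedVariationOn g (Set.Icc 0 1)) : Integrable g m := by
  have hmeas : AEStronglyMeasurable g m := by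
    refine ((measurable_comp_clmp hg).aestronglyMeasurable).congr ?_
    filter_upwards [m_ae_mem] with x hx
    rw [clmp_of_mem hx]
  refine Integrable.mono' (integrable_const (|g 0| + (eVariationOn g (Set.Icc 0 1)).toReal))
    hmeas ?_
  filter_upwards [m_ae_mem] with x hx
  have := bv_abs_le hg hx (Set.left_mem_Icc.mpr (by norm_num))
  rw [Real.norm_eq_abs]
  calc |g x| ≤ |g 0| + |g x - g 0| := by
        linarith [abs_sub_abs_le_abs_sub (g x) (g 0)]
    _ ≤ _ := by linarith

end Var

lemma sup_bound {g : ℝ → ℝ} {K : ℝ} (hK : 0 ≤ K)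
    (hvar : eVariationOn g (Set.Icc 0 1) ≤ ENNReal.ofReal K)
    (hint : Integrable g m) (habs : ∫ x, |g x| ∂m ≤ 1) :
    ∀ x ∈ Set.Icc (0:ℝ) 1, |g x| ≤ 2 + K := by
  have hbv : BoundedVariationOn g (Set.Icc 0 1) :=
    ne_top_of_le_ne_top ENNReal.ofReal_ne_top hvar
  have hKle : (eVariationOn g (Set.Icc 0 1)).toReal ≤ K := by
    have := ENNReal.toReal_mono ENNReal.ofReal_ne_top hvar
    rwa [ENNReal.toReal_ofReal hK] at this
  have hy : ∃ y ∈ Set.Icc (0:ℝ) 1, |g y| ≤ 2 := by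
    by_contra hcon
    push_neg at hcon
    have h2 : (2:ℝ) ≤ ∫ x, |g x| ∂m := by
      have : ∫ _x, (2:ℝ) ∂m ≤ ∫ x, |g x| ∂m := by
        refine integral_mono_ae (integrable_const 2) hint.abs ?_
        filter_upwards [m_ae_mem] with x hx
        exact (hcon x hx).le
      simpa using this
    linarith
  obtain ⟨y, hy01, hy2⟩ := hy
  intro x hx
  have hd : |g x - g y| ≤ K := le_trans (bv_abs_le hbv hx hy01) hKle
  calc |g x| ≤ |g y| + |g x - g y| := by
        linarith [abs_sub_abs_le_abs_sub (g x) (g y)]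
    _ ≤ 2 + K := by linarith

lemma evar_add_le (f g : ℝ → ℝ) (s : Set ℝ) :
    eVariationOn (fun x => f x + g x) s ≤ eVariationOn f s + eVariationOn g s := by
  refine iSup_le ?_
  rintro ⟨n, u, hu, us⟩
  calc ∑ i ∈ Finset.range n, edist (f (u (i+1)) + g (u (i+1))) (f (u i) + g (u i))
      ≤ ∑ i ∈ Finset.range n,
        (edist (f (u (i+1))) (f (u i)) + edist (g (u (i+1))) (g (u i))) :=
        Finset.sum_le_sum fun i _ => edist_add_add_le _ _ _ _
    _ = (∑ i ∈ Finset.range n, edist (f (u (i+1))) (f (u i)))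
        + ∑ i ∈ Finset.range n, edist (g (u (i+1))) (g (u i)) := Finset.sum_add_distrib
    _ ≤ _ := add_le_add (eVariationOn.sum_le (f := f) (n := n) hu us) (eVariationOn.sum_le (f := g) (n := n) hu us)

lemma evar_const_mul (c : ℝ) (f : ℝ → ℝ) (s : Set ℝ) :
    eVariationOn (fun x => c * f x) s ≤ ENNReal.ofReal |c| * eVariationOn f s := by
  refine iSup_le ?_
  rintro ⟨n, u, hu, us⟩
  have hed : ∀ a b : ℝ, edist (c * a) (c * b) = ENNReal.ofReal |c| * edist a b := by
    intro a b
    rw [edist_dist, edist_dist, Real.dist_eq, Real.dist_eq, ← mul_sub, abs_mul,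
      ENNReal.ofReal_mul (abs_nonneg c)]
  calc ∑ i ∈ Finset.range n, edist (c * f (u (i+1))) (c * f (u i))
      = ∑ i ∈ Finset.range n, ENNReal.ofReal |c| * edist (f (u (i+1))) (f (u i)) := by
        simp_rw [hed]
    _ = ENNReal.ofReal |c| * ∑ i ∈ Finset.range n, edist (f (u (i+1))) (f (u i)) := by
        rw [Finset.mul_sum]
    _ ≤ _ := mul_le_mul_right (eVariationOn.sum_le (f := f) (n := n) hu us) _

lemma evar_sum_le {ι : Type*} (t : Finset ι) (F : ι → ℝ → ℝ) (s : Set ℝ) :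
    eVariationOn (fun x => ∑ i ∈ t, F i x) s ≤ ∑ i ∈ t, eVariationOn (F i) s := by
  classical
  induction t using Finset.induction_on with
  | empty =>
      simp only [Finset.sum_empty]
      exact le_of_eq (eVariationOn.constant_on (by
        intro a ha b hb
        simp_all [Set.mem_image]))
  | insert _ _ hnotmem ih =>
      rename_i a t'
      simp only [Finset.sum_insert hnotmem]
      exact le_trans (evar_add_le _ _ s) (add_le_add le_rfl ih)

lemma cover_lemma {x : ℝ} (hx : x ∈ Set.Icc (0:ℝ) 1) {N : ℕ} (hN : 1 ≤ N) :
    ∃ i : ℕ, i < N ∧ x ∈ Set.Icc ((i:ℝ)/N) ((i+1:ℝ)/N) := by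
  obtain ⟨hx0, hx1⟩ := hx
  have hN0 : (0:ℝ) < N := by exact_mod_cast hN
  refine ⟨min (Nat.floor (x*N)) (N-1), lt_of_le_of_lt (min_le_right _ _) (by omega), ?_, ?_⟩
  · rw [div_le_iff₀ hN0]
    calc ((min (Nat.floor (x*N)) (N-1) : ℕ) : ℝ) ≤ ((Nat.floor (x*N) : ℕ) : ℝ) := by
          exact_mod_cast min_le_left _ _
      _ ≤ x*N := Nat.floor_le (by positivity)
  · rw [le_div_iff₀ hN0]
    by_cases h : Nat.floor (x*N) ≤ N-1
    · rw [min_eq_left h]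
      push_cast
      linarith [Nat.lt_floor_add_one (x*N)]
    · rw [min_eq_right (le_of_not_ge h)]
      push_cast [Nat.cast_sub hN]
      nlinarith

/-- Key L¹-type estimate: two monotone functions close at grid points are close in L¹. -/
lemma est {C ε : ℝ} (hC : 0 ≤ C) (hε : 0 ≤ ε) {N : ℕ} (hN : 1 ≤ N) {u u' : ℝ → ℝ}
    (hu : Monotone u) (hu' : Monotone u') (hb : ∀ x, |u x| ≤ C) (hb' : ∀ x, |u' x| ≤ C)
    (hq : ∀ i ≤ N, |u ((i:ℝ)/N) - u' ((i:ℝ)/N)| ≤ ε) :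
    ∫⁻ x, ‖u x - u' x‖₊ ∂m ≤ ENNReal.ofReal (ε + 4*C/N) := by
  have hN0 : (0:ℝ) < N := by exact_mod_cast hN
  set Δ : ℕ → ℝ := fun i => u ((i+1:ℝ)/N) - u ((i:ℝ)/N) with hΔ
  set Δ' : ℕ → ℝ := fun i => u' ((i+1:ℝ)/N) - u' ((i:ℝ)/N) with hΔ'
  have hΔ0 : ∀ i, 0 ≤ Δ i := fun i => sub_nonneg.mpr (hu (by gcongr; linarith))
  have hΔ'0 : ∀ i, 0 ≤ Δ' i := fun i => sub_nonneg.mpr (hu' (by gcongr; linarith))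
  have hpt : ∀ i : ℕ, i < N → ∀ x ∈ Set.Icc ((i:ℝ)/N) ((i+1:ℝ)/N),
      (‖u x - u' x‖₊ : ℝ≥0∞) ≤ ENNReal.ofReal (ε + Δ i + Δ' i) := by
    intro i hi x hx
    rw [← enorm_eq_nnnorm, Real.enorm_eq_ofReal_abs]
    apply ENNReal.ofReal_le_ofReal
    have h1 : u x ≤ u ((i+1:ℝ)/N) := hu hx.2
    have h2 : u ((i:ℝ)/N) ≤ u x := hu hx.1
    have h1' : u' x ≤ u' ((i+1:ℝ)/N) := hu' hx.2
    have h2' : u' ((i:ℝ)/N) ≤ u' x := hu' hx.1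
    have e1 := hq i hi.le
    have e2 := hq (i+1) hi
    rw [abs_le] at e1 e2
    rw [abs_le]
    constructor
    · push_cast at e1 e2 ⊢
      simp only [hΔ, hΔ']
      nlinarith [hΔ0 i, hΔ'0 i]
    · push_cast at e1 e2 ⊢
      simp only [hΔ, hΔ']
      nlinarith [hΔ0 i, hΔ'0 i]
  have hcover : Set.Icc (0:ℝ) 1 ⊆ ⋃ i : Fin N, Set.Icc ((i:ℝ)/N) ((i+1:ℝ)/N) := by
    intro x hx
    obtain ⟨i, hi, hmem⟩ := cover_lemma hx hN
    exact Set.mem_iUnion.mpr ⟨⟨i, hi⟩, hmem⟩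
  calc ∫⁻ x, ‖u x - u' x‖₊ ∂m
      ≤ ∫⁻ x in ⋃ i : Fin N, Set.Icc ((i:ℝ)/N) ((i+1:ℝ)/N), ‖u x - u' x‖₊ ∂volume := by
        rw [m_def]
        exact lintegral_mono' (Measure.restrict_mono hcover le_rfl) le_rfl
    _ ≤ ∑' i : Fin N, ∫⁻ x in Set.Icc ((i:ℝ)/N) ((i+1:ℝ)/N), ‖u x - u' x‖₊ ∂volume :=
        lintegral_iUnion_le _ _
    _ = ∑ i ∈ Finset.range N, ∫⁻ x in Set.Icc ((i:ℝ)/N) ((i+1:ℝ)/N), ‖u x - u' x‖₊ ∂volume := by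
        rw [tsum_fintype]
        exact Finset.sum_bij (fun i _ => (i : ℕ)) (fun i _ => Finset.mem_range.mpr i.2)
          (fun i _ j _ h => Fin.ext h)
          (fun j hj => ⟨⟨j, Finset.mem_range.mp hj⟩, Finset.mem_univ _, rfl⟩)
          (fun i _ => rfl)
    _ ≤ ∑ i ∈ Finset.range N, ENNReal.ofReal (ε + Δ i + Δ' i) * ENNReal.ofReal (1/N) := by
        refine Finset.sum_le_sum fun i hi => ?_
        have hi' := Finset.mem_range.mp hi
        calc ∫⁻ x in Set.Icc ((i:ℝ)/N) ((i+1:ℝ)/N), ‖u x - u' x‖₊ ∂volume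
            ≤ ∫⁻ _x in Set.Icc ((i:ℝ)/N) ((i+1:ℝ)/N), ENNReal.ofReal (ε + Δ i + Δ' i) ∂volume :=
              setLIntegral_mono measurable_const (hpt i hi')
          _ = ENNReal.ofReal (ε + Δ i + Δ' i) * volume (Set.Icc ((i:ℝ)/N) ((i+1:ℝ)/N)) :=
              setLIntegral_const _ _
          _ = ENNReal.ofReal (ε + Δ i + Δ' i) * ENNReal.ofReal (1/N) := by
              rw [Real.volume_Icc]
              congr 1
              rw [div_sub_div_same]
              norm_num
    _ = (∑ i ∈ Finset.range N, ENNReal.ofReal (ε + Δ i + Δ' i)) * ENNReal.ofReal (1/N) := by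
        rw [Finset.sum_mul]
    _ = ENNReal.ofReal ((∑ i ∈ Finset.range N, (ε + Δ i + Δ' i)) * (1/N)) := by
        rw [← ENNReal.ofReal_sum_of_nonneg
            (fun i _ => add_nonneg (add_nonneg hε (hΔ0 i)) (hΔ'0 i)),
          ← ENNReal.ofReal_mul
            (Finset.sum_nonneg fun i _ => add_nonneg (add_nonneg hε (hΔ0 i)) (hΔ'0 i))]
    _ ≤ ENNReal.ofReal (ε + 4*C/N) := by
        apply ENNReal.ofReal_le_ofReal
        have hsum : ∑ i ∈ Finset.range N, (ε + Δ i + Δ' i) ≤ N*ε + 4*C := by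
          have h1 : ∑ i ∈ Finset.range N, Δ i = u ((N:ℝ)/N) - u ((0:ℝ)/N) := by
            have := Finset.sum_range_sub (fun i : ℕ => u ((i:ℝ)/N)) N
            push_cast at this
            simpa [hΔ] using this
          have h2 : ∑ i ∈ Finset.range N, Δ' i = u' ((N:ℝ)/N) - u' ((0:ℝ)/N) := by
            have := Finset.sum_range_sub (fun i : ℕ => u' ((i:ℝ)/N)) N
            push_cast at this
            simpa [hΔ'] using this
          have b1 := abs_le.mp (hb ((N:ℝ)/N))
          have b2 := abs_le.mp (hb ((0:ℝ)/N))
          have b3 := abs_le.mp (hb' ((N:ℝ)/N))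
          have b4 := abs_le.mp (hb' ((0:ℝ)/N))
          rw [Finset.sum_add_distrib, Finset.sum_add_distrib, Finset.sum_const,
            Finset.card_range, h1, h2]
          simp only [nsmul_eq_mul]
          linarith [b1.2, b1.1, b2.1, b2.2, b3.1, b3.2, b4.1, b4.2]
        calc (∑ i ∈ Finset.range N, (ε + Δ i + Δ' i)) * (1/N)
            ≤ (N*ε + 4*C) * (1/N) := by
              apply mul_le_mul_of_nonneg_right hsum (by positivity)
          _ = ε + 4*C/N := by field_simp

/-- For piecewise expanding maps `τ_n ⇉ τ` whose Frobenius–Perron operators satisfy a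
common Lasota–Yorke inequality, the Cesàro averages `f_n = (1/n) Σ_{i=1}^n P_{τ_{(1,i)}} f`
of any BV density `f` are uniformly bounded and of uniformly bounded variation, and
hence form a precompact set in `L¹`. -/
theorem cesaro_averages_precompact
    (s : ℝ) (hs : 1 < s)
    (τseq : ℕ → ℝ → ℝ) (τ : ℝ → ℝ)
    (hpe : ∀ n, 1 ≤ n → PiecewiseExpanding (τseq n) s)
    (hconv : TendstoUniformlyOn τseq τ atTop (Set.Icc 0 1))
    (P : ℕ → (ℝ → ℝ) → (ℝ → ℝ))
    (hP : ∀ n, 1 ≤ n → ∀ g : ℝ → ℝ, Integrable g m → IsFPImage (τseq n) g (P n g))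
    (A B : ℝ) (hA0 : 0 ≤ A) (hA1 : A < 1)
    (hLY : ∀ n, 1 ≤ n → ∀ g : ℝ → ℝ, BoundedVariationOn g (Set.Icc 0 1) →
      eVariationOn (P n g) (Set.Icc 0 1) ≤
        ENNReal.ofReal A * eVariationOn g (Set.Icc 0 1)
          + ENNReal.ofReal (B * ∫ x, |g x| ∂m))
    (f : ℝ → ℝ) (hfbv : BoundedVariationOn f (Set.Icc 0 1))
    (hf0 : ∀ x, 0 ≤ f x) (hfint : Integrable f m) (hf1 : ∫ x, f x ∂m = 1)
    (fseq : ℕ → ℝ → ℝ)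
    (hfseq : ∀ n x, fseq n x = (1 / (n : ℝ)) * ∑ i ∈ Finset.Icc 1 n, opComp P i f x) :
    (∃ C : ℝ, ∀ n, 1 ≤ n →
      (∀ x ∈ Set.Icc (0 : ℝ) 1, |fseq n x| ≤ C) ∧
      eVariationOn (fseq n) (Set.Icc 0 1) ≤ ENNReal.ofReal C) ∧
    ∀ φ : ℕ → ℕ, StrictMono φ → (∀ k, 1 ≤ φ k) →
      ∃ ψ : ℕ → ℕ, StrictMono ψ ∧ ∃ g : ℝ → ℝ, Integrable g m ∧
        Tendsto (fun k => ∫ x, |fseq (φ (ψ k)) x - g x| ∂m) atTop (𝓝 0) := by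
  classical
  have hA1' : 0 < 1 - A := by linarith
  set V0 : ℝ := (eVariationOn f (Set.Icc 0 1)).toReal with hV0def
  set K : ℝ := V0 + |B|/(1-A) with hKdef
  have hV00 : 0 ≤ V0 := ENNReal.toReal_nonneg
  have hK0 : 0 ≤ K := by positivity
  -- the inductive invariant
  have main : ∀ i : ℕ, Integrable (opComp P i f) m ∧ (0 ≤ᵐ[m] opComp P i f) ∧
      (∫ x, opComp P i f x ∂m = 1) ∧
      eVariationOn (opComp P i f) (Set.Icc 0 1) ≤ ENNReal.ofReal K := by
    intro i
    induction i with
    | zero =>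
        refine ⟨hfint, ae_of_all _ hf0, hf1, ?_⟩
        show eVariationOn f _ ≤ _
        rw [← ENNReal.ofReal_toReal hfbv]
        exact ENNReal.ofReal_le_ofReal (le_add_of_nonneg_right (by positivity))
    | succ i ih =>
        obtain ⟨hint, hpos, hone, hvar⟩ := ih
        have hbv : BoundedVariationOn (opComp P i f) (Set.Icc 0 1) :=
          ne_top_of_le_ne_top ENNReal.ofReal_ne_top hvar
        have habs : ∫ x, |opComp P i f x| ∂m = 1 := by
          rw [← hone]
          apply integral_congr_ae
          filter_upwards [hpos] with x hx using abs_of_nonneg hx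
        have hstep : opComp P (i+1) f = P (i+1) (opComp P i f) := rfl
        have hvar1 : eVariationOn (opComp P (i+1) f) (Set.Icc 0 1) ≤ ENNReal.ofReal K := by
          rw [hstep]
          refine le_trans (hLY (i+1) (Nat.le_add_left 1 i) _ hbv) ?_
          rw [habs, mul_one]
          calc ENNReal.ofReal A * eVariationOn (opComp P i f) (Set.Icc 0 1) + ENNReal.ofReal B
              ≤ ENNReal.ofReal A * ENNReal.ofReal K + ENNReal.ofReal |B| :=
                add_le_add (mul_le_mul_right hvar _) (ENNReal.ofReal_le_ofReal (le_abs_self B))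
            _ = ENNReal.ofReal (A*K + |B|) := by
                rw [← ENNReal.ofReal_mul hA0,
                  ← ENNReal.ofReal_add (by positivity) (abs_nonneg B)]
            _ ≤ ENNReal.ofReal K := by
                apply ENNReal.ofReal_le_ofReal
                have hBle : |B| ≤ (1-A)*K := by
                  have h1 : (1-A)*K = (1-A)*V0 + |B| := by
                    rw [hKdef]
                    field_simp
                  nlinarith [mul_nonneg hA1'.le hV00]
                nlinarith
        have hbv1 : BoundedVariationOn (opComp P (i+1) f) (Set.Icc 0 1) :=
          ne_top_of_le_ne_top ENNReal.ofReal_ne_top hvar1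
        have hint1 : Integrable (opComp P (i+1) f) m := bv_integrable hbv1
        have hFP : IsFPImage (τseq (i+1)) (opComp P i f) (P (i+1) (opComp P i f)) :=
          hP (i+1) (Nat.le_add_left 1 i) _ hint
        have hone1 : ∫ x, opComp P (i+1) f x ∂m = 1 := by
          have h := hFP Set.univ MeasurableSet.univ
          rw [Set.preimage_univ, setIntegral_univ, setIntegral_univ] at h
          rw [hstep, h, hone]
        have hpos1 : 0 ≤ᵐ[m] opComp P (i+1) f := by
          apply ae_nonneg_of_forall_setIntegral_nonneg hint1
          intro t ht _
          rw [hstep, hFP t ht]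
          apply integral_nonneg_of_ae
          exact hpos.filter_mono (ae_mono Measure.restrict_le_self)
        exact ⟨hint1, hpos1, hone1, hvar1⟩
  have habs : ∀ i : ℕ, ∫ x, |opComp P i f x| ∂m = 1 := by
    intro i
    rw [← (main i).2.2.1]
    apply integral_congr_ae
    filter_upwards [(main i).2.1] with x hx using abs_of_nonneg hx
  have hsup : ∀ i : ℕ, ∀ x ∈ Set.Icc (0:ℝ) 1, |opComp P i f x| ≤ 2 + K := fun i =>
    sup_bound hK0 (main i).2.2.2 (main i).1 (le_of_eq (habs i))
  -- part 1
  have part1 : ∀ n, 1 ≤ n →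
      (∀ x ∈ Set.Icc (0 : ℝ) 1, |fseq n x| ≤ 2 + K) ∧
      eVariationOn (fseq n) (Set.Icc 0 1) ≤ ENNReal.ofReal (2 + K) := by
    intro n hn
    have hn0 : (0:ℝ) < n := by exact_mod_cast hn
    have hcard : (Finset.Icc 1 n).card = n := by
      rw [Nat.card_Icc]
      omega
    constructor
    · intro x hx
      rw [hfseq n x, abs_mul, abs_of_nonneg (by positivity : (0:ℝ) ≤ 1/(n:ℝ))]
      calc (1/(n:ℝ)) * |∑ i ∈ Finset.Icc 1 n, opComp P i f x|
          ≤ (1/(n:ℝ)) * ∑ i ∈ Finset.Icc 1 n, |opComp P i f x| :=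
            mul_le_mul_of_nonneg_left (Finset.abs_sum_le_sum_abs _ _) (by positivity)
        _ ≤ (1/(n:ℝ)) * ((n:ℝ) * (2 + K)) := by
            apply mul_le_mul_of_nonneg_left _ (by positivity)
            calc ∑ i ∈ Finset.Icc 1 n, |opComp P i f x|
                ≤ ∑ _i ∈ Finset.Icc 1 n, (2 + K) :=
                  Finset.sum_le_sum fun i _ => hsup i x hx
              _ = (n:ℝ) * (2 + K) := by
                  rw [Finset.sum_const, hcard, nsmul_eq_mul]
        _ = 2 + K := by field_simp
    · have heq : fseq n = fun x => (1/(n:ℝ)) * ∑ i ∈ Finset.Icc 1 n, opComp P i f x :=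
        funext (hfseq n)
      rw [heq]
      refine le_trans (evar_const_mul _ _ _) ?_
      refine le_trans (mul_le_mul_right (evar_sum_le _ _ _) _) ?_
      have h1 : ∑ i ∈ Finset.Icc 1 n, eVariationOn (opComp P i f) (Set.Icc 0 1)
          ≤ ∑ _i ∈ Finset.Icc 1 n, ENNReal.ofReal K :=
        Finset.sum_le_sum fun i _ => (main i).2.2.2
      refine le_trans (mul_le_mul_right h1 _) ?_
      rw [Finset.sum_const, hcard, nsmul_eq_mul]
      have : (n : ℝ≥0∞) = ENNReal.ofReal (n:ℝ) := by
        rw [ENNReal.ofReal_natCast]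
      rw [this, abs_of_nonneg (by positivity : (0:ℝ) ≤ 1/(n:ℝ)), ← mul_assoc,
        ← ENNReal.ofReal_mul (by positivity)]
      have hone : (1/(n:ℝ)) * (n:ℝ) = 1 := by field_simp
      rw [hone, ENNReal.ofReal_one, one_mul]
      exact ENNReal.ofReal_le_ofReal (by linarith)
  refine ⟨⟨2 + K, part1⟩, ?_⟩
  intro φ hφ hφ1
  set C : ℝ := 2 + K with hCdef
  have hC0 : 0 ≤ C := by positivity
  set C2 : ℝ := 2*C with hC2def
  have hC20 : 0 ≤ C2 := by positivity
  have hsupk : ∀ k, ∀ x ∈ Set.Icc (0:ℝ) 1, |fseq (φ k) x| ≤ C := fun k =>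
    (part1 (φ k) (hφ1 k)).1
  have hvark : ∀ k, eVariationOn (fseq (φ k)) (Set.Icc 0 1) ≤ ENNReal.ofReal C := fun k =>
    (part1 (φ k) (hφ1 k)).2
  have hbvk : ∀ k, BoundedVariationOn (fseq (φ k)) (Set.Icc 0 1) := fun k =>
    ne_top_of_le_ne_top ENNReal.ofReal_ne_top (hvark k)
  set u : ℕ → ℝ → ℝ := fun k => varu (fseq (φ k)) with hudef
  set v : ℕ → ℝ → ℝ := fun k x => u k x - fseq (φ k) (clmp x) with hvdef
  have humono : ∀ k, Monotone (u k) := fun k => varu_mono (hbvk k)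
  have hvmono : ∀ k, Monotone (v k) := fun k => varv_mono (hbvk k)
  have hVle : ∀ k, (eVariationOn (fseq (φ k)) (Set.Icc 0 1)).toReal ≤ C := by
    intro k
    have := ENNReal.toReal_mono ENNReal.ofReal_ne_top (hvark k)
    rwa [ENNReal.toReal_ofReal hC0] at this
  have hub : ∀ k x, |u k x| ≤ C2 := by
    intro k x
    rw [hudef, abs_of_nonneg (varu_nonneg x)]
    refine le_trans (le_trans (varu_le (hbvk k) x) (hVle k)) (by linarith)
  have hvb : ∀ k x, |v k x| ≤ C2 := by
    intro k x
    have h1 : |u k x| ≤ C := by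
      rw [hudef, abs_of_nonneg (varu_nonneg x)]
      exact le_trans (varu_le (hbvk k) x) (hVle k)
    have h2 : |fseq (φ k) (clmp x)| ≤ C := hsupk k _ (clmp_mem x)
    have h3 : |v k x| ≤ |u k x| + |fseq (φ k) (clmp x)| := by
      rw [hvdef]
      exact abs_sub _ _
    linarith
  -- sequential compactness of the values at rational points
  set S : Set (ℚ → ℝ × ℝ) :=
    Set.univ.pi (fun _ => (Set.Icc (-C2) C2) ×ˢ (Set.Icc (-C2) C2)) with hSdef
  have hScomp : IsCompact S := isCompact_univ_pi fun _ => isCompact_Icc.prod isCompact_Icc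
  set Fk : ℕ → ℚ → ℝ × ℝ := fun k q => (u k (q:ℝ), v k (q:ℝ)) with hFkdef
  have hmem : ∀ k, Fk k ∈ S := by
    intro k
    rw [hSdef, Set.mem_univ_pi]
    intro q
    simp only [hFkdef, Set.mem_prod, Set.mem_Icc]
    exact ⟨abs_le.mp (hub k q), abs_le.mp (hvb k q)⟩
  obtain ⟨F, hFS, ψ, hψ, hFconv⟩ := hScomp.isSeqCompact hmem
  refine ⟨ψ, hψ, ?_⟩
  have hpc : ∀ q : ℚ, Tendsto (fun k => Fk (ψ k) q) atTop (𝓝 (F q)) := by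
    intro q
    have := tendsto_pi_nhds.mp hFconv q
    simpa [Function.comp] using this
  set W : ℕ → ℝ → ℝ := fun k x => u (ψ k) x - v (ψ k) x with hWdef
  have hWmeas : ∀ k, Measurable (W k) := fun k =>
    ((humono (ψ k)).measurable).sub ((hvmono (ψ k)).measurable)
  have hWb : ∀ k x, |W k x| ≤ 2*C2 := by
    intro k x
    have h3 : |W k x| ≤ |u (ψ k) x| + |v (ψ k) x| := by
      rw [hWdef]
      exact abs_sub _ _
    linarith [hub (ψ k) x, hvb (ψ k) x]
  have hWint : ∀ k, Integrable (W k) m := by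
    intro k
    refine Integrable.mono' (integrable_const (2*C2)) (hWmeas k).aestronglyMeasurable ?_
    exact ae_of_all _ fun x => by rw [Real.norm_eq_abs]; exact hWb k x
  set G : ℕ → (ℝ →₁[m] ℝ) := fun k => (hWint k).toL1 (W k) with hGdef
  have hcauchy : CauchySeq G := by
    rw [Metric.cauchySeq_iff]
    intro ε hε
    obtain ⟨N, hNgt⟩ := exists_nat_gt (max 1 (32*C2/ε))
    have hN1 : 1 ≤ N := by
      have h := lt_of_le_of_lt (le_max_left 1 (32*C2/ε)) hNgt
      exact_mod_cast h.le
    have hNpos : (0:ℝ) < N := by exact_mod_cast hN1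
    have hNr : 32*C2/ε < N := lt_of_le_of_lt (le_max_right _ _) hNgt
    have h4 : 4*C2/N ≤ ε/8 := by
      rw [div_le_div_iff₀ hNpos (by norm_num)]
      have := (div_lt_iff₀ hε).mp hNr
      nlinarith
    set a : ℕ → (Fin (N+1) → ℝ × ℝ) := fun k i => Fk (ψ k) ((i.val : ℚ)/(N:ℚ)) with hadef
    have ha : Tendsto a atTop (𝓝 (fun i : Fin (N+1) => F ((i.val : ℚ)/(N:ℚ)))) :=
      tendsto_pi_nhds.mpr fun i => hpc _
    have hacauchy := ha.cauchySeq
    rw [Metric.cauchySeq_iff] at hacauchy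
    obtain ⟨K0, hK0'⟩ := hacauchy (ε/8) (by positivity)
    refine ⟨K0, fun k hk l hl => ?_⟩
    have hgrid : ∀ i : ℕ, i ≤ N →
        |u (ψ k) ((i:ℝ)/N) - u (ψ l) ((i:ℝ)/N)| ≤ ε/8 ∧
        |v (ψ k) ((i:ℝ)/N) - v (ψ l) ((i:ℝ)/N)| ≤ ε/8 := by
      intro i hi
      have hd := hK0' k hk l hl
      have hdi : dist (a k ⟨i, by omega⟩) (a l ⟨i, by omega⟩) ≤ dist (a k) (a l) :=
        dist_le_pi_dist _ _ _
      have hcast : (((i : ℚ)/(N:ℚ) : ℚ) : ℝ) = (i:ℝ)/N := by push_cast; rfl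
      have hak : ∀ j, a j ⟨i, by omega⟩ =
          (u (ψ j) ((i:ℝ)/N), v (ψ j) ((i:ℝ)/N)) := by
        intro j
        simp only [hadef, hFkdef]
        rw [hcast]
      rw [hak k, hak l, Prod.dist_eq] at hdi
      have hdu := le_trans (le_max_left _ _) hdi
      have hdv := le_trans (le_max_right _ _) hdi
      rw [Real.dist_eq] at hdu hdv
      exact ⟨by linarith, by linarith⟩
    have e1 : ∫⁻ x, ‖u (ψ k) x - u (ψ l) x‖₊ ∂m ≤ ENNReal.ofReal (ε/8 + 4*C2/N) :=
      est hC20 (by positivity) hN1 (humono _) (humono _) (hub _) (hub _)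
        (fun i hi => (hgrid i hi).1)
    have e2 : ∫⁻ x, ‖v (ψ k) x - v (ψ l) x‖₊ ∂m ≤ ENNReal.ofReal (ε/8 + 4*C2/N) :=
      est hC20 (by positivity) hN1 (hvmono _) (hvmono _) (hvb _) (hvb _)
        (fun i hi => (hgrid i hi).2)
    have hWlin : ∫⁻ x, ‖W k x - W l x‖₊ ∂m ≤ ENNReal.ofReal (ε/2) := by
      have hptw : ∀ x, (‖W k x - W l x‖₊ : ℝ≥0∞) ≤
          (‖u (ψ k) x - u (ψ l) x‖₊ : ℝ≥0∞) + (‖v (ψ k) x - v (ψ l) x‖₊ : ℝ≥0∞) := by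
        intro x
        rw [← ENNReal.coe_add, ENNReal.coe_le_coe]
        have hrw : W k x - W l x =
            (u (ψ k) x - u (ψ l) x) - (v (ψ k) x - v (ψ l) x) := by
          rw [hWdef]; ring
        rw [hrw]
        exact nnnorm_sub_le _ _
      calc ∫⁻ x, ‖W k x - W l x‖₊ ∂m
          ≤ ∫⁻ x, ((‖u (ψ k) x - u (ψ l) x‖₊ : ℝ≥0∞)
              + (‖v (ψ k) x - v (ψ l) x‖₊ : ℝ≥0∞)) ∂m := lintegral_mono hptw
        _ = (∫⁻ x, ‖u (ψ k) x - u (ψ l) x‖₊ ∂m) + ∫⁻ x, ‖v (ψ k) x - v (ψ l) x‖₊ ∂m :=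
            lintegral_add_left
              (((humono (ψ k)).measurable.sub (humono (ψ l)).measurable).enorm) _
        _ ≤ ENNReal.ofReal (ε/8 + 4*C2/N) + ENNReal.ofReal (ε/8 + 4*C2/N) := add_le_add e1 e2
        _ = ENNReal.ofReal ((ε/8 + 4*C2/N) + (ε/8 + 4*C2/N)) :=
            (ENNReal.ofReal_add (by positivity) (by positivity)).symm
        _ ≤ ENNReal.ofReal (ε/2) := ENNReal.ofReal_le_ofReal (by linarith)
    have hdistkl : dist (G k) (G l) ≤ ε/2 := by
      rw [dist_edist, hGdef]
      rw [MeasureTheory.Integrable.edist_toL1_toL1]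
      have hrw : ∫⁻ x, edist (W k x) (W l x) ∂m = ∫⁻ x, ‖W k x - W l x‖₊ ∂m := by
        apply lintegral_congr
        intro x
        rw [edist_eq_enorm_sub, enorm_eq_nnnorm]
      rw [hrw]
      calc (∫⁻ x, ‖W k x - W l x‖₊ ∂m).toReal
          ≤ (ENNReal.ofReal (ε/2)).toReal :=
            ENNReal.toReal_mono ENNReal.ofReal_ne_top hWlin
        _ = ε/2 := ENNReal.toReal_ofReal (by positivity)
    exact lt_of_le_of_lt hdistkl (by linarith)
  obtain ⟨Gi, hGi⟩ := cauchySeq_tendsto_of_complete hcauchy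
  have hGiint : Integrable (⇑Gi) m := L1.integrable_coeFn Gi
  refine ⟨⇑Gi, hGiint, ?_⟩
  have hdist0 : Tendsto (fun k => dist (G k) Gi) atTop (𝓝 0) := by
    rw [tendsto_iff_dist_tendsto_zero] at hGi
    exact hGi
  refine Tendsto.congr (fun k => ?_) hdist0
  have hintk : Integrable (fseq (φ (ψ k))) m := bv_integrable (hbvk (ψ k))
  have hdiff : Integrable (fun x => fseq (φ (ψ k)) x - Gi x) m := hintk.sub hGiint
  have h1 : dist (G k) Gi = (∫⁻ x, edist (W k x) (Gi x) ∂m).toReal := by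
    rw [dist_edist, hGdef]
    conv_lhs => rw [← MeasureTheory.Integrable.toL1_coeFn Gi hGiint]
    rw [MeasureTheory.Integrable.edist_toL1_toL1]
  have h2 : ∫⁻ x, edist (W k x) (Gi x) ∂m = ∫⁻ x, ‖fseq (φ (ψ k)) x - Gi x‖₊ ∂m := by
    apply lintegral_congr_ae
    filter_upwards [m_ae_mem] with x hx
    rw [edist_eq_enorm_sub, enorm_eq_nnnorm]
    have hWx : W k x = fseq (φ (ψ k)) x := by
      simp only [hWdef, hvdef]
      rw [clmp_of_mem hx]
      ring
    rw [hWx]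
  have h3 : ∫ x, |fseq (φ (ψ k)) x - Gi x| ∂m
      = (∫⁻ x, ‖fseq (φ (ψ k)) x - Gi x‖₊ ∂m).toReal := by
    have := integral_norm_eq_lintegral_enorm hdiff.aestronglyMeasurable
    simpa [Real.norm_eq_abs, enorm_eq_nnnorm] using this
  rw [h1, h2, h3]
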